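/- Let X, Y be invertible matrices and ν real. Then (X ⓢ_ν Y)⁻¹ = (X*)⁻¹ ⓢ_ν (Y*)⁻¹, and (X⁻¹) ⓢ_ν (Y⁻¹) = (X* ⓢ_ν Y*)⁻¹. -/

import Mathlib

open Matrix ComplexOrder

/-- Real power of a Hermitian matrix via the spectral theorem (functional calculus);
junk value `0` for non-Hermitian matrices. -/
noncomputable def Matrix.hrpow {n : ℕ} (A : Matrix (Fin n) (Fin n) ℂ) (r : ℝ) :
    Matrix (Fin n) (Fin n) ℂ :=
  if h : A.IsHermitian then
    (h.eigenvectorUnitary : Matrix (Fin n) (Fin n) ℂ) *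
      Matrix.diagonal (fun i => ((h.eigenvalues i ^ r : ℝ) : ℂ)) *
      (h.eigenvectorUnitary : Matrix (Fin n) (Fin n) ℂ)ᴴ
  else 0

/-- Weighted geometric mean `A #_ν B` of positive definite matrices:
`A^{1/2} (A^{-1/2} B A^{-1/2})^ν A^{1/2}`. -/
noncomputable def Matrix.gmean {n : ℕ} (A B : Matrix (Fin n) (Fin n) ℂ) (ν : ℝ) :
    Matrix (Fin n) (Fin n) ℂ :=
  A.hrpow (1/2) * ((A.hrpow (-(1/2)) * B * A.hrpow (-(1/2))).hrpow ν) * A.hrpow (1/2)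

/-- Quadratic weighted geometric mean `X ⓢ_ν Y = X* (|Y X⁻¹|²)^ν X`. -/
noncomputable def Matrix.qgmean {n : ℕ} (X Y : Matrix (Fin n) (Fin n) ℂ) (ν : ℝ) :
    Matrix (Fin n) (Fin n) ℂ :=
  Xᴴ * ((Y * X⁻¹)ᴴ * (Y * X⁻¹)).hrpow ν * X

lemma continuousOn_of_finite {f : ℝ → ℝ} {s : Set ℝ} (hs : s.Finite) : ContinuousOn f s := by
  rw [continuousOn_iff_continuous_restrict]
  have : Finite s := hs
  exact continuous_of_discreteTopology

lemma hrpow_eq_cfc {n : ℕ} {A : Matrix (Fin n) (Fin n) ℂ} (hA : A.IsHermitian) (r : ℝ) :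
    A.hrpow r = cfc (fun x : ℝ => x ^ r) A := by
  rw [hA.cfc_eq, Matrix.hrpow, dif_pos hA, Matrix.IsHermitian.cfc]
  rfl

lemma spectrum_pos {n : ℕ} {P : Matrix (Fin n) (Fin n) ℂ} (hP : P.PosDef) :
    ∀ x ∈ spectrum ℝ P, 0 < x := by
  intro x hx
  rw [hP.isHermitian.spectrum_real_eq_range_eigenvalues] at hx
  obtain ⟨i, rfl⟩ := hx
  exact hP.eigenvalues_pos i

lemma hrpow_inv_eq {n : ℕ} {P : Matrix (Fin n) (Fin n) ℂ} (hP : P.PosDef) (ν : ℝ) :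
    (P.hrpow ν)⁻¹ = P.hrpow (-ν) := by
  have hsa : IsSelfAdjoint P := hP.1
  refine Matrix.inv_eq_right_inv ?_
  rw [hrpow_eq_cfc hP.1, hrpow_eq_cfc hP.1,
    ← cfc_mul _ _ P (continuousOn_of_finite P.finite_real_spectrum)
      (continuousOn_of_finite P.finite_real_spectrum)]
  rw [cfc_congr (g := fun _ : ℝ => (1 : ℝ)) (fun x hx => by
    have hx' := spectrum_pos hP x hx
    simp only []
    rw [Real.rpow_neg hx'.le, mul_inv_cancel₀ (Real.rpow_pos_of_pos hx' ν).ne'])]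
  exact cfc_const_one ℝ P

lemma hrpow_of_inv {n : ℕ} {P : Matrix (Fin n) (Fin n) ℂ} (hP : P.PosDef) (ν : ℝ) :
    (P⁻¹).hrpow ν = P.hrpow (-ν) := by
  have hsa : IsSelfAdjoint P := hP.1
  have hu := hP.isUnit
  have hinv : ((hu.unit⁻¹ : (Matrix (Fin n) (Fin n) ℂ)ˣ) : Matrix (Fin n) (Fin n) ℂ) = P⁻¹ := by
    rw [Matrix.coe_units_inv, hu.unit_spec]
  have hsa' : IsSelfAdjoint ((hu.unit⁻¹ : (Matrix (Fin n) (Fin n) ℂ)ˣ) : Matrix (Fin n) (Fin n) ℂ) := by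
    rw [hinv]; exact hP.1.inv
  rw [hrpow_eq_cfc (hP.1.inv) ν, hrpow_eq_cfc hP.1, ← hinv]
  have hsaP : IsSelfAdjoint ((hu.unit : (Matrix (Fin n) (Fin n) ℂ)ˣ) : Matrix (Fin n) (Fin n) ℂ) := by
    rw [hu.unit_spec]; exact hP.1
  rw [← cfc_comp_inv (fun x : ℝ => x ^ ν) hu.unit
    (continuousOn_of_finite (Set.Finite.image _ (Matrix.finite_real_spectrum))) hsaP]
  rw [hu.unit_spec]
  exact cfc_congr fun x hx => by
    have hx' := spectrum_pos hP x hx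
    rw [Real.rpow_neg hx'.le, ← Real.inv_rpow hx'.le]

lemma posDef_CTmul {n : ℕ} {M : Matrix (Fin n) (Fin n) ℂ} (hM : IsUnit M) :
    (Mᴴ * M).PosDef := by
  refine Matrix.posDef_iff_dotProduct_mulVec.2 ⟨Matrix.isHermitian_conjTranspose_mul_self M, fun x hx => ?_⟩
  rw [← Matrix.mulVec_mulVec, Matrix.dotProduct_mulVec, Matrix.vecMul_conjTranspose, star_star,
    Matrix.dotProduct_star_self_pos_iff]
  exact (Matrix.mulVec_injective_iff_isUnit.mpr hM |>.ne_iff' (Matrix.mulVec_zero M)).2 hx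


lemma qgmean_inv_aux {n : ℕ} (X Y : Matrix (Fin n) (Fin n) ℂ)
    (hX : IsUnit X) (hY : IsUnit Y) (ν : ℝ) :
    (X.qgmean Y ν)⁻¹ = (Xᴴ)⁻¹.qgmean ((Yᴴ)⁻¹) ν := by
  have hXd : IsUnit X.det := (Matrix.isUnit_iff_isUnit_det X).mp hX
  have hXHd : IsUnit Xᴴ.det := by rw [Matrix.det_conjTranspose]; exact hXd.star
  have hM : IsUnit (Y * X⁻¹) := hY.mul (Matrix.isUnit_nonsing_inv_iff.mpr hX)
  have hP : ((Y * X⁻¹)ᴴ * (Y * X⁻¹)).PosDef := posDef_CTmul hM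
  have hQP : ((Yᴴ)⁻¹ * ((Xᴴ)⁻¹)⁻¹)ᴴ * ((Yᴴ)⁻¹ * ((Xᴴ)⁻¹)⁻¹)
      = ((Y * X⁻¹)ᴴ * (Y * X⁻¹))⁻¹ := by
    simp only [Matrix.mul_inv_rev, ← Matrix.conjTranspose_nonsing_inv,
      Matrix.nonsing_inv_nonsing_inv _ hXd, Matrix.conjTranspose_mul,
      Matrix.conjTranspose_conjTranspose, Matrix.mul_assoc]
  rw [Matrix.qgmean, Matrix.qgmean, Matrix.mul_inv_rev, Matrix.mul_inv_rev, hQP,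
    hrpow_of_inv hP, hrpow_inv_eq hP,
    show ((Xᴴ)⁻¹)ᴴ = X⁻¹ by rw [← Matrix.conjTranspose_nonsing_inv,
      Matrix.conjTranspose_conjTranspose], Matrix.mul_assoc]


theorem stmt_15 {n : ℕ} (X Y : Matrix (Fin n) (Fin n) ℂ)
    (hX : IsUnit X) (hY : IsUnit Y) (ν : ℝ) :
    (X.qgmean Y ν)⁻¹ = (Xᴴ)⁻¹.qgmean ((Yᴴ)⁻¹) ν ∧
      (X⁻¹).qgmean (Y⁻¹) ν = ((Xᴴ).qgmean (Yᴴ) ν)⁻¹ := by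
  refine ⟨qgmean_inv_aux X Y hX hY ν, ?_⟩
  have hXH : IsUnit Xᴴ := by
    rw [Matrix.isUnit_iff_isUnit_det, Matrix.det_conjTranspose]
    exact ((Matrix.isUnit_iff_isUnit_det X).mp hX).star
  have hYH : IsUnit Yᴴ := by
    rw [Matrix.isUnit_iff_isUnit_det, Matrix.det_conjTranspose]
    exact ((Matrix.isUnit_iff_isUnit_det Y).mp hY).star
  have := qgmean_inv_aux Xᴴ Yᴴ hXH hYH ν
  rw [Matrix.conjTranspose_conjTranspose, Matrix.conjTranspose_conjTranspose] at this
  exact this.symm
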